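/- arXiv:0910.2620 — 2 statements merged into one kernel-verified Lean document; each statement's English description precedes it below -/
import Mathlib

section
/- Let n ≥ 2 and let k be an integer with 1 ≤ k ≤ n-1. There exists a constant C(k,n) such that for all positive integers T, ∑_{a ∈ {1,...,T}ⁿ} ((a₁ + ⋯ + aₙ)/n)ᵏ / (a₁⋯aₙ)^{k/n} ≤ C(k,n)·Tⁿ. -/
open Finset Real

lemma key_step {s : ℝ} (hs0 : 0 < s) (hs1 : s < 1) {M : ℝ} (hM : 1 ≤ M) :
    (1 - s) * M ^ (-s) ≤ M ^ (1 - s) - (M - 1) ^ (1 - s) := by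
  have hM0 : 0 < M := lt_of_lt_of_le one_pos hM
  have hinv : 0 ≤ 1 + (-1 / M) := by
    have : 1 / M ≤ 1 := (div_le_one hM0).mpr hM
    rw [neg_div]; linarith
  have h1 : (M - 1) ^ (1 - s) = M ^ (1 - s) * (1 + (-1 / M)) ^ (1 - s) := by
    rw [← Real.mul_rpow hM0.le hinv]
    congr 1
    field_simp
    ring
  have hb : (1 + (-1 / M)) ^ (1 - s) ≤ 1 + (1 - s) * (-1 / M) := by
    refine rpow_one_add_le_one_add_mul_self ?_ (by linarith) (by linarith)
    have : 1 / M ≤ 1 := (div_le_one hM0).mpr hM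
    rw [neg_div]; linarith
  have hdiv : M ^ (1 - s) / M = M ^ (-s) := by
    rw [div_eq_iff hM0.ne', show (1 : ℝ) - s = -s + 1 by ring, Real.rpow_add hM0,
      Real.rpow_one]
  have h2 : M ^ (1 - s) * (1 + (1 - s) * (-1 / M)) = M ^ (1 - s) - (1 - s) * M ^ (-s) := by
    rw [← hdiv]
    field_simp
    ring
  calc (1 - s) * M ^ (-s) = M ^ (1 - s) - M ^ (1 - s) * (1 + (1 - s) * (-1 / M)) := by
        rw [h2]; ring
    _ ≤ M ^ (1 - s) - (M - 1) ^ (1 - s) := by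
        rw [h1]
        have := mul_le_mul_of_nonneg_left hb (Real.rpow_nonneg hM0.le (1 - s))
        linarith

lemma sum_neg_rpow {s : ℝ} (hs0 : 0 < s) (hs1 : s < 1) (T : ℕ) :
    ∑ x ∈ Finset.Icc 1 T, (x : ℝ) ^ (-s) ≤ (T : ℝ) ^ (1 - s) / (1 - s) := by
  have h1s : 0 < 1 - s := by linarith
  rw [le_div_iff₀ h1s]
  have htel : ∑ x ∈ Finset.Icc 1 T, ((x : ℝ) ^ (1 - s) - ((x : ℝ) - 1) ^ (1 - s))
      = (T : ℝ) ^ (1 - s) := by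
    rw [← Finset.Ico_add_one_right_eq_Icc, Finset.sum_Ico_eq_sum_range]
    have : ∀ i ∈ Finset.range (T + 1 - 1), ((1 + i : ℕ) : ℝ) ^ (1 - s) - (((1 + i : ℕ) : ℝ) - 1) ^ (1 - s)
        = (fun m : ℕ => ((m : ℕ) : ℝ) ^ (1 - s)) (i + 1) - (fun m : ℕ => ((m : ℕ) : ℝ) ^ (1 - s)) i := by
      intro i _
      push_cast
      ring_nf
    rw [Finset.sum_congr rfl this, Finset.sum_range_sub (fun m : ℕ => ((m : ℕ) : ℝ) ^ (1 - s))]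
    simp [Real.zero_rpow h1s.ne']
  calc (∑ x ∈ Finset.Icc 1 T, (x : ℝ) ^ (-s)) * (1 - s)
      = ∑ x ∈ Finset.Icc 1 T, (1 - s) * (x : ℝ) ^ (-s) := by
        rw [Finset.sum_mul]; exact Finset.sum_congr rfl fun x _ => mul_comm _ _
    _ ≤ ∑ x ∈ Finset.Icc 1 T, ((x : ℝ) ^ (1 - s) - ((x : ℝ) - 1) ^ (1 - s)) := by
        refine Finset.sum_le_sum fun x hx => ?_
        have : (1 : ℕ) ≤ x := (Finset.mem_Icc.mp hx).1
        exact key_step hs0 hs1 (by exact_mod_cast this)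
    _ = (T : ℝ) ^ (1 - s) := htel

theorem stmt_3 (n k : ℕ) (hn : 2 ≤ n) (hk1 : 1 ≤ k) (hkn : k ≤ n - 1) :
    ∃ C : ℝ, ∀ T : ℕ, 0 < T →
      ∑ a ∈ Fintype.piFinset (fun _ : Fin n => Finset.Icc 1 T),
        ((∑ i, (a i : ℝ)) / n) ^ k / (∏ i, (a i : ℝ)) ^ ((k : ℝ) / n) ≤
      C * (T : ℝ) ^ n := by
  have hn0 : 0 < n := by omega
  have hnR : (0:ℝ) < n := Nat.cast_pos.mpr hn0
  set s : ℝ := (k:ℝ)/n with hsdef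
  have hs0 : 0 < s := div_pos (by exact_mod_cast hk1) hnR
  have hs1 : s < 1 := by
    rw [hsdef, div_lt_one hnR]
    exact_mod_cast (by omega : k < n)
  have h1s : 0 < 1 - s := by linarith
  refine ⟨(n:ℝ) / (1-s)^(n-1), fun T hT => ?_⟩
  have hT0 : (0:ℝ) < T := Nat.cast_pos.mpr hT
  set A := Fintype.piFinset (fun _ : Fin n => Finset.Icc 1 T) with hA
  -- pointwise bound
  have step1 : ∀ a ∈ A, ((∑ i, (a i : ℝ)) / n) ^ k / (∏ i, (a i : ℝ)) ^ s
      ≤ ∑ j : Fin n, ((a j : ℝ)^k * ∏ i, (a i : ℝ) ^ (-s)) := by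
    intro a ha
    rw [hA, Fintype.mem_piFinset] at ha
    have ha1 : ∀ i, (1:ℝ) ≤ a i := fun i => by
      exact_mod_cast (Finset.mem_Icc.mp (ha i)).1
    have hai : ∀ i, (0:ℝ) < a i := fun i => lt_of_lt_of_le one_pos (ha1 i)
    have hprod : (0:ℝ) < ∏ i, (a i : ℝ) := Finset.prod_pos fun i _ => hai i
    obtain ⟨j, -, hj⟩ := Finset.exists_max_image Finset.univ (fun i => (a i : ℝ))
      ⟨⟨0, hn0⟩, Finset.mem_univ _⟩
    have hnum : ((∑ i, (a i : ℝ)) / n) ^ k ≤ ∑ j' : Fin n, (a j' : ℝ)^k := by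
      have h1 : (∑ i, (a i : ℝ)) / n ≤ a j := by
        rw [div_le_iff₀ hnR]
        calc ∑ i, (a i : ℝ) ≤ ∑ _i : Fin n, (a j : ℝ) :=
              Finset.sum_le_sum fun i _ => hj i (Finset.mem_univ i)
          _ = (a j : ℝ) * n := by simp [mul_comm]
      calc ((∑ i, (a i : ℝ)) / n) ^ k ≤ (a j : ℝ)^k := by
            apply pow_le_pow_left₀ _ h1
            positivity
        _ ≤ ∑ j' : Fin n, (a j' : ℝ)^k :=
            Finset.single_le_sum (f := fun j' : Fin n => (a j' : ℝ)^k) (fun i _ => by positivity) (Finset.mem_univ j)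
    have hden : ∏ i, (a i : ℝ) ^ (-s) = ((∏ i, (a i : ℝ)) ^ s)⁻¹ := by
      rw [← Real.rpow_neg hprod.le, ← Real.finset_prod_rpow _ _ (fun i _ => (hai i).le)]
    calc ((∑ i, (a i : ℝ)) / n) ^ k / (∏ i, (a i : ℝ)) ^ s
        ≤ (∑ j' : Fin n, (a j' : ℝ)^k) / (∏ i, (a i : ℝ)) ^ s := by
          apply div_le_div_of_nonneg_right hnum -- maybe wrong name
          positivity
      _ = ∑ j' : Fin n, (a j' : ℝ)^k / (∏ i, (a i : ℝ)) ^ s := Finset.sum_div _ _ _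
      _ = ∑ j' : Fin n, ((a j' : ℝ)^k * ∏ i, (a i : ℝ) ^ (-s)) := by
          refine Finset.sum_congr rfl fun j' _ => ?_
          rw [hden, div_eq_mul_inv]
  -- factorization for each j
  have step2 : ∀ j : Fin n, ∑ a ∈ A, ((a j : ℝ)^k * ∏ i, (a i : ℝ) ^ (-s))
      = ∏ i : Fin n, ∑ x ∈ Finset.Icc 1 T, ((if i = j then (x:ℝ)^k else 1) * (x:ℝ)^(-s)) := by
    intro j
    rw [Finset.prod_univ_sum]
    refine Finset.sum_congr rfl fun a _ => ?_
    rw [Finset.prod_mul_distrib, Finset.prod_ite_eq' Finset.univ j (fun i => (a i:ℝ)^k)]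
    simp
  have hTs : ∑ x ∈ Finset.Icc 1 T, (x:ℝ)^(-s) ≤ (T:ℝ)^(1-s)/(1-s) := sum_neg_rpow hs0 hs1 T
  have hTk : ∑ x ∈ Finset.Icc 1 T, (x:ℝ)^k * (x:ℝ)^(-s) ≤ (T:ℝ) * ((T:ℝ)^k * (T:ℝ)^(-s)) := by
    have hb : ∀ x ∈ Finset.Icc 1 T, (x:ℝ)^k * (x:ℝ)^(-s) ≤ (T:ℝ)^k * (T:ℝ)^(-s) := by
      intro x hx
      obtain ⟨hx1, hxT⟩ := Finset.mem_Icc.mp hx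
      have hx0 : (0:ℝ) < x := by exact_mod_cast hx1
      have hxT' : (x:ℝ) ≤ T := by exact_mod_cast hxT
      have e1 : (x:ℝ)^k * (x:ℝ)^(-s) = (x:ℝ)^((k:ℝ) + -s) := by
        rw [Real.rpow_add hx0, Real.rpow_natCast]
      have e2 : (T:ℝ)^k * (T:ℝ)^(-s) = (T:ℝ)^((k:ℝ) + -s) := by
        rw [Real.rpow_add hT0, Real.rpow_natCast]
      rw [e1, e2]
      apply Real.rpow_le_rpow hx0.le hxT'
      have : (1:ℝ) ≤ (k:ℝ) := by exact_mod_cast hk1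
      linarith
    calc ∑ x ∈ Finset.Icc 1 T, (x:ℝ)^k * (x:ℝ)^(-s)
        ≤ (Finset.Icc 1 T).card • ((T:ℝ)^k * (T:ℝ)^(-s)) := Finset.sum_le_card_nsmul _ _ _ hb
      _ = (T:ℝ) * ((T:ℝ)^k * (T:ℝ)^(-s)) := by
          rw [Nat.card_Icc, nsmul_eq_mul]
          norm_num
  have step3 : ∀ j : Fin n,
      (∏ i : Fin n, ∑ x ∈ Finset.Icc 1 T, ((if i = j then (x:ℝ)^k else 1) * (x:ℝ)^(-s)))
      ≤ ((T:ℝ) * ((T:ℝ)^k * (T:ℝ)^(-s))) * ((T:ℝ)^(1-s)/(1-s))^(n-1) := by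
    intro j
    have hb : ∀ i : Fin n, ∑ x ∈ Finset.Icc 1 T, ((if i = j then (x:ℝ)^k else 1) * (x:ℝ)^(-s))
        ≤ (if i = j then (T:ℝ) * ((T:ℝ)^k * (T:ℝ)^(-s)) else (T:ℝ)^(1-s)/(1-s)) := by
      intro i
      by_cases h : i = j
      · simpa [h] using hTk
      · simpa [h] using hTs
    have hprodeq : (∏ i : Fin n, (if i = j then (T:ℝ) * ((T:ℝ)^k * (T:ℝ)^(-s)) else (T:ℝ)^(1-s)/(1-s)))
        = ((T:ℝ) * ((T:ℝ)^k * (T:ℝ)^(-s))) * ((T:ℝ)^(1-s)/(1-s))^(n-1) := by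
      rw [← Finset.mul_prod_erase Finset.univ _ (Finset.mem_univ j), if_pos rfl]
      congr 1
      rw [Finset.prod_congr rfl (fun i hi => if_neg (Finset.ne_of_mem_erase hi)),
        Finset.prod_const, Finset.card_erase_of_mem (Finset.mem_univ j), Finset.card_univ,
        Fintype.card_fin]
    rw [← hprodeq]
    refine Finset.prod_le_prod (fun i _ => ?_) (fun i _ => hb i)
    refine Finset.sum_nonneg fun x hx => ?_
    have hx0 : (0:ℝ) < x := by exact_mod_cast (Finset.mem_Icc.mp hx).1
    by_cases h : i = j <;> simp [h] <;> positivity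
  have hexp : 1 + ((k:ℝ) + -s) + (1-s)*((n:ℝ)-1) = (n:ℝ) := by
    rw [hsdef]
    field_simp
    ring
  have hpow : (T:ℝ)^(n:ℕ) = (T:ℝ) * ((T:ℝ)^k * (T:ℝ)^(-s)) * ((T:ℝ)^(1-s))^(n-1) := by
    have h1 : ((T:ℝ)^(1-s))^((n-1:ℕ)) = (T:ℝ)^((1-s)*((n:ℝ)-1)) := by
      rw [← Real.rpow_natCast ((T:ℝ)^(1-s)) (n-1), ← Real.rpow_mul hT0.le]
      congr 1
      rw [Nat.cast_sub (by omega : 1 ≤ n), Nat.cast_one]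
    have h2 : (T:ℝ)^((n:ℝ)) = (T:ℝ)^(1 + ((k:ℝ) + -s) + (1-s)*((n:ℝ)-1)) := by rw [hexp]
    rw [h1, ← Real.rpow_natCast (T:ℝ) k, ← Real.rpow_natCast (T:ℝ) n, h2,
      Real.rpow_add hT0, Real.rpow_add hT0, Real.rpow_add hT0, Real.rpow_one]
  calc ∑ a ∈ A, ((∑ i, (a i : ℝ)) / n) ^ k / (∏ i, (a i : ℝ)) ^ s
      ≤ ∑ a ∈ A, ∑ j : Fin n, ((a j : ℝ)^k * ∏ i, (a i : ℝ) ^ (-s)) :=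
        Finset.sum_le_sum step1
    _ = ∑ j : Fin n, ∑ a ∈ A, ((a j : ℝ)^k * ∏ i, (a i : ℝ) ^ (-s)) := Finset.sum_comm
    _ = ∑ j : Fin n, ∏ i : Fin n, ∑ x ∈ Finset.Icc 1 T, ((if i = j then (x:ℝ)^k else 1) * (x:ℝ)^(-s)) :=
        Finset.sum_congr rfl fun j _ => step2 j
    _ ≤ ∑ _j : Fin n, ((T:ℝ) * ((T:ℝ)^k * (T:ℝ)^(-s))) * ((T:ℝ)^(1-s)/(1-s))^(n-1) :=
        Finset.sum_le_sum fun j _ => step3 j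
    _ = (n:ℝ) * (((T:ℝ) * ((T:ℝ)^k * (T:ℝ)^(-s))) * ((T:ℝ)^(1-s)/(1-s))^(n-1)) := by
        rw [Finset.sum_const, Finset.card_univ, Fintype.card_fin, nsmul_eq_mul]
    _ = (n:ℝ) / (1-s)^(n-1) * (T:ℝ)^n := by
        rw [div_pow, hpow]
        field_simp
end

section
/- Let n ≥ 2 and k an integer with 1 ≤ k ≤ n-1. There exists a constant C(k,n) such that for all positive integers T, the expectation of L_T^k over the uniform distribution on G(T) is at most C(k,n), where L_T(a) = ((a₁+⋯+aₙ)/n)/(a₁⋯aₙ)^{1/n}. -/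
/-- The set of primitive vectors in `{1,...,T}^n`. -/
def GSet (n T : ℕ) : Finset (Fin n → ℕ) :=
  (Fintype.piFinset fun _ : Fin n => Finset.Icc 1 T).filter
    (fun a => Finset.univ.gcd a = 1)

/-- The ratio of the arithmetic to the geometric mean. -/
noncomputable def Lfun (n : ℕ) (a : Fin n → ℕ) : ℝ :=
  ((∑ i, (a i : ℝ)) / n) / (∏ i, (a i : ℝ)) ^ ((1 : ℝ) / n)

open Finset Real

lemma bern_step {β : ℝ} (hβ0 : 0 ≤ β) (hβ1 : β ≤ 1)
    {m : ℕ} (hm : 1 ≤ m) :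
    β * (m : ℝ) ^ (β - 1) ≤ (m : ℝ) ^ β - ((m : ℝ) - 1) ^ β := by
  have hm0 : (0:ℝ) < m := by exact_mod_cast hm
  have hm1 : (1:ℝ) ≤ m := by exact_mod_cast hm
  have hs : (-1 : ℝ) ≤ -1 / m := by
    rw [neg_div, neg_le_neg_iff, div_le_one hm0]; exact hm1
  have hbern := rpow_one_add_le_one_add_mul_self hs hβ0 hβ1
  have h1 : (1 : ℝ) + -1 / m = ((m : ℝ) - 1) / m := by field_simp; ring
  rw [h1] at hbern
  have h2 : ((m : ℝ) - 1) ^ β = (m : ℝ) ^ β * (((m:ℝ) - 1) / m) ^ β := by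
    rw [Real.div_rpow (by linarith) hm0.le]
    rw [mul_div_cancel₀ _ (by positivity : ((m:ℝ) ^ β) ≠ 0)]
  have h3 : (m:ℝ) ^ β * (1 + β * (-1 / m)) = (m:ℝ)^β - β * (m:ℝ)^(β-1) := by
    rw [Real.rpow_sub hm0, Real.rpow_one]
    field_simp
    ring
  calc β * (m : ℝ) ^ (β - 1) = (m:ℝ)^β - ((m:ℝ)^β - β * (m:ℝ)^(β-1)) := by ring
  _ ≤ (m : ℝ) ^ β - ((m : ℝ) - 1) ^ β := by
      rw [h2, ← h3]
      have := mul_le_mul_of_nonneg_left hbern (by positivity : (0:ℝ) ≤ (m:ℝ)^β)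
      linarith

lemma sum_rpow_le {β : ℝ} (hβ0 : 0 < β) (hβ1 : β ≤ 1) (T : ℕ) :
    ∑ m ∈ Finset.Icc 1 T, (m : ℝ) ^ (β - 1) ≤ (T : ℝ) ^ β / β := by
  induction T with
  | zero => simp [Real.zero_rpow hβ0.ne']
  | succ T ih =>
    rw [Finset.sum_Icc_succ_top (by omega)]
    have hstep := bern_step hβ0.le hβ1 (m := T + 1) (by omega)
    have h : ((T:ℝ) + 1) - 1 = (T:ℝ) := by ring
    push_cast at hstep ⊢
    rw [h] at hstep
    rw [le_div_iff₀ hβ0] at ih ⊢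
    nlinarith [ih]

lemma sum_inv_sq_le (T : ℕ) : ∑ d ∈ Finset.Icc 2 T, ((d:ℝ)^2)⁻¹ ≤ 3/4 := by
  have key : ∀ m : ℕ, ∑ d ∈ Finset.Icc 2 (m+2), ((d:ℝ)^2)⁻¹ ≤ 3/4 - ((m:ℝ)+2)⁻¹ := by
    intro m
    induction m with
    | zero => norm_num
    | succ m ih =>
      have h2 : 2 ≤ m + 2 := by omega
      rw [show m + 1 + 2 = (m + 2) + 1 from rfl, Finset.sum_Icc_succ_top (by omega)]
      have hm : (0:ℝ) < (m:ℝ) + 2 := by positivity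
      have hstep : (((m:ℝ)+2+1)^2)⁻¹ ≤ ((m:ℝ)+2)⁻¹ - ((m:ℝ)+2+1)⁻¹ := by
        have he : ((m:ℝ)+2)⁻¹ - ((m:ℝ)+2+1)⁻¹ = (((m:ℝ)+2)*((m:ℝ)+2+1))⁻¹ := by
          field_simp
          ring
        rw [he]
        apply inv_anti₀ (by positivity)
        nlinarith
      have heq : ((m:ℝ)+1+2)⁻¹ = ((m:ℝ)+2+1)⁻¹ := by ring_nf
      push_cast
      push_cast at ih
      rw [heq]
      linarith
  rcases le_or_gt T 1 with h | h
  · rw [Finset.Icc_eq_empty (by omega)]; norm_num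
  · obtain ⟨m, rfl⟩ : ∃ m, T = m + 2 := ⟨T - 2, by omega⟩
    have := key m
    have : (0:ℝ) < (m:ℝ) + 2 := by positivity
    have := key m
    have hpos : (0:ℝ) ≤ ((m:ℝ)+2)⁻¹ := by positivity
    linarith

lemma card_div_filter (T d : ℕ) (hd : 0 < d) :
    ((Finset.Icc 1 T).filter (fun x => d ∣ x)).card = T / d := by
  rw [show Finset.Icc 1 T = Finset.Ioc 0 T from rfl]
  exact Nat.Ioc_filter_dvd_card_eq_div T d

lemma card_lower (n T : ℕ) (hn : 2 ≤ n) (hT : 0 < T) :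
    ((T : ℝ)) ^ n ≤ 4 * ((GSet n T).card : ℝ) := by
  classical
  set box := (Fintype.piFinset fun _ : Fin n => Finset.Icc 1 T) with hbox
  have hboxcard : box.card = T ^ n := by
    simp [hbox, Fintype.card_piFinset]
  -- nonprimitive part
  have hsplit : (GSet n T).card + (box.filter (fun a => ¬ Finset.univ.gcd a = 1)).card
      = box.card := Finset.card_filter_add_card_filter_not _
  have hsub : box.filter (fun a => ¬ Finset.univ.gcd a = 1) ⊆
      (Finset.Icc 2 T).biUnion (fun d => box.filter (fun a => ∀ i, d ∣ a i)) := by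
    intro a ha
    rw [Finset.mem_filter] at ha
    obtain ⟨hab, hg⟩ := ha
    set d := Finset.univ.gcd a with hd
    have hdvd : ∀ i, d ∣ a i := fun i => Finset.gcd_dvd (Finset.mem_univ i)
    have i0 : Fin n := ⟨0, by omega⟩
    have ha0 : a i0 ∈ Finset.Icc 1 T := by
      rw [Fintype.mem_piFinset] at hab; exact hab i0
    rw [Finset.mem_Icc] at ha0
    have hd0 : 0 < d := Nat.pos_of_dvd_of_pos (hdvd i0) (by omega)
    have hdT : d ≤ T := le_trans (Nat.le_of_dvd (by omega) (hdvd i0)) ha0.2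
    have hd2 : 2 ≤ d := by omega
    rw [Finset.mem_biUnion]
    exact ⟨d, Finset.mem_Icc.mpr ⟨hd2, hdT⟩, Finset.mem_filter.mpr ⟨hab, hdvd⟩⟩
  have hcard_d : ∀ d ∈ Finset.Icc 2 T,
      (box.filter (fun a => ∀ i, d ∣ a i)).card = (T / d) ^ n := by
    intro d hd
    rw [Finset.mem_Icc] at hd
    have : box.filter (fun a => ∀ i, d ∣ a i)
        = Fintype.piFinset fun _ : Fin n => (Finset.Icc 1 T).filter (fun x => d ∣ x) := by
      ext a
      simp [hbox, Fintype.mem_piFinset, Finset.mem_filter, forall_and]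
    rw [this]
    simp [Fintype.card_piFinset, card_div_filter T d (by omega)]
  have hnp : ((box.filter (fun a => ¬ Finset.univ.gcd a = 1)).card : ℝ)
      ≤ (3/4) * (T:ℝ)^n := by
    calc ((box.filter (fun a => ¬ Finset.univ.gcd a = 1)).card : ℝ)
        ≤ ((((Finset.Icc 2 T).biUnion (fun d => box.filter (fun a => ∀ i, d ∣ a i))).card : ℕ) : ℝ) := by
          exact_mod_cast Finset.card_le_card hsub
      _ ≤ ((∑ d ∈ Finset.Icc 2 T, (box.filter (fun a => ∀ i, d ∣ a i)).card : ℕ) : ℝ) := by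
          exact_mod_cast Finset.card_biUnion_le
      _ = ∑ d ∈ Finset.Icc 2 T, (((T / d : ℕ) : ℝ)) ^ n := by
          push_cast
          exact Finset.sum_congr rfl (fun d hd => by rw [hcard_d d hd]; push_cast; ring)
      _ ≤ ∑ d ∈ Finset.Icc 2 T, ((d:ℝ)^2)⁻¹ * (T:ℝ)^n := by
          apply Finset.sum_le_sum
          intro d hd
          rw [Finset.mem_Icc] at hd
          have hd0 : (0:ℝ) < d := by exact_mod_cast (by omega : 0 < d)
          have h1 : ((T / d : ℕ) : ℝ) ≤ (T : ℝ) / d := Nat.cast_div_le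
          have h2 : (((T / d : ℕ) : ℝ)) ^ n ≤ ((T:ℝ)/d) ^ n :=
            pow_le_pow_left₀ (by positivity) h1 n
          have h3 : ((T:ℝ)/d) ^ n = (T:ℝ)^n / (d:ℝ)^n := div_pow _ _ _
          have h4 : (d:ℝ)^2 ≤ (d:ℝ)^n := by
            apply pow_le_pow_right₀ (by exact_mod_cast (by omega : 1 ≤ d)) hn
          have h5 : (T:ℝ)^n / (d:ℝ)^n ≤ (T:ℝ)^n / (d:ℝ)^2 := by
            apply div_le_div_of_nonneg_left (by positivity) (by positivity) h4
          calc (((T / d : ℕ) : ℝ)) ^ n ≤ (T:ℝ)^n / (d:ℝ)^n := by rw [← h3]; exact h2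
            _ ≤ (T:ℝ)^n / (d:ℝ)^2 := h5
            _ = ((d:ℝ)^2)⁻¹ * (T:ℝ)^n := by ring
      _ = (∑ d ∈ Finset.Icc 2 T, ((d:ℝ)^2)⁻¹) * (T:ℝ)^n := by rw [Finset.sum_mul]
      _ ≤ (3/4) * (T:ℝ)^n := by
          apply mul_le_mul_of_nonneg_right (sum_inv_sq_le T) (by positivity)
  have : ((GSet n T).card : ℝ) + ((box.filter (fun a => ¬ Finset.univ.gcd a = 1)).card : ℝ)
      = (T:ℝ)^n := by
    have h := hsplit
    rw [hboxcard] at h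
    exact_mod_cast h
  linarith

theorem stmt_4 (n k : ℕ) (hn : 2 ≤ n) (hk1 : 1 ≤ k) (hkn : k ≤ n - 1) :
    ∃ C : ℝ, ∀ T : ℕ, 0 < T →
      ∑ a ∈ GSet n T, Lfun n a ^ k ≤ C * ((GSet n T).card : ℝ) := by
  classical
  have hn0 : (0:ℝ) < n := by positivity
  have hkn' : k < n := by omega
  set α : ℝ := k / n with hα
  set β : ℝ := 1 - α with hβdef
  have hα0 : 0 ≤ α := by positivity
  have hβ0 : 0 < β := by
    have : α < 1 := by
      rw [hα, div_lt_one hn0]; exact_mod_cast hkn'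
    simp [hβdef]; linarith
  have hβ1 : β ≤ 1 := by simp [hβdef]; linarith
  refine ⟨4 / β ^ n, fun T hT => ?_⟩
  have hT1 : (1:ℝ) ≤ T := by exact_mod_cast hT
  set box := (Fintype.piFinset fun _ : Fin n => Finset.Icc 1 T) with hbox
  -- pointwise bound
  have hpt : ∀ a ∈ box, Lfun n a ^ k ≤ (T:ℝ)^k * ∏ i, (a i:ℝ) ^ (β - 1) := by
    intro a ha
    rw [Fintype.mem_piFinset] at ha
    have h1 : ∀ i, (1:ℝ) ≤ a i := fun i => by
      exact_mod_cast (Finset.mem_Icc.mp (ha i)).1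
    have h2 : ∀ i, (a i : ℝ) ≤ T := fun i => by
      exact_mod_cast (Finset.mem_Icc.mp (ha i)).2
    have hP1 : (1:ℝ) ≤ ∏ i, (a i:ℝ) := by
      calc (1:ℝ) = ∏ _i : Fin n, (1:ℝ) := by simp
        _ ≤ ∏ i, (a i:ℝ) := Finset.prod_le_prod (by intros; norm_num) (fun i _ => h1 i)
    have hP0 : (0:ℝ) < ∏ i, (a i:ℝ) := by linarith
    have hy1 : (1:ℝ) ≤ (∏ i, (a i:ℝ)) ^ ((1:ℝ)/n) :=
      Real.one_le_rpow hP1 (by positivity)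
    have hS : (∑ i, (a i:ℝ)) / n ≤ T := by
      rw [div_le_iff₀ hn0]
      calc (∑ i, (a i:ℝ)) ≤ ∑ _i : Fin n, (T:ℝ) := Finset.sum_le_sum (fun i _ => h2 i)
        _ = T * n := by simp [Finset.sum_const, Finset.card_univ, mul_comm]
    have hS0 : 0 ≤ (∑ i, (a i:ℝ)) / n := by positivity
    have hyk : ((∏ i, (a i:ℝ)) ^ ((1:ℝ)/n)) ^ k = (∏ i, (a i:ℝ)) ^ α := by
      rw [← Real.rpow_natCast ((∏ i, (a i:ℝ)) ^ ((1:ℝ)/n)) k,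
        ← Real.rpow_mul hP0.le, hα]
      congr 1
      field_simp
    have hprod : (∏ i, (a i:ℝ)) ^ (β - 1) = ∏ i, (a i:ℝ) ^ (β - 1) := by
      rw [← Real.finset_prod_rpow _ _ (fun i _ => by linarith [h1 i])]
    rw [Lfun, div_pow, hyk]
    have hPα : (0:ℝ) < (∏ i, (a i:ℝ)) ^ α := by positivity
    have hPα1 : (1:ℝ) ≤ (∏ i, (a i:ℝ)) ^ α := Real.one_le_rpow hP1 hα0
    calc ((∑ i, (a i:ℝ)) / n) ^ k / (∏ i, (a i:ℝ)) ^ α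
        ≤ (T:ℝ)^k / (∏ i, (a i:ℝ)) ^ α := by
          exact (div_le_div_iff_of_pos_right hPα).mpr (pow_le_pow_left₀ hS0 hS k)
      _ = (T:ℝ)^k * (∏ i, (a i:ℝ)) ^ (β - 1) := by
          rw [div_eq_mul_inv, ← Real.rpow_neg hP0.le]
          congr 2
          simp [hβdef]
      _ = (T:ℝ)^k * ∏ i, (a i:ℝ) ^ (β - 1) := by rw [hprod]
  have hT0 : (0:ℝ) ≤ T := by linarith
  have hβn : β * (n:ℕ) = ((n - k : ℕ):ℝ) := by
    rw [Nat.cast_sub hkn'.le, hβdef, hα]; field_simp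
  have hsub : GSet n T ⊆ box := Finset.filter_subset _ _
  have hc := card_lower n T hn hT
  calc ∑ a ∈ GSet n T, Lfun n a ^ k
      ≤ ∑ a ∈ GSet n T, (T:ℝ)^k * ∏ i, (a i:ℝ)^(β-1) :=
        Finset.sum_le_sum (fun a ha => hpt a (hsub ha))
    _ ≤ ∑ a ∈ box, (T:ℝ)^k * ∏ i, (a i:ℝ)^(β-1) :=
        Finset.sum_le_sum_of_subset_of_nonneg hsub (fun a _ _ => by positivity)
    _ = (T:ℝ)^k * ∑ a ∈ box, ∏ i, (a i:ℝ)^(β-1) := by rw [← Finset.mul_sum]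
    _ = (T:ℝ)^k * ∏ _i : Fin n, ∑ m ∈ Finset.Icc 1 T, (m:ℝ)^(β-1) := by
        rw [Finset.prod_univ_sum]
    _ = (T:ℝ)^k * (∑ m ∈ Finset.Icc 1 T, (m:ℝ)^(β-1))^n := by
        rw [Finset.prod_const, Finset.card_univ, Fintype.card_fin]
    _ ≤ (T:ℝ)^k * ((T:ℝ)^β/β)^n := by
        apply mul_le_mul_of_nonneg_left ?_ (by positivity)
        apply pow_le_pow_left₀ ?_ (sum_rpow_le hβ0 hβ1 T) n
        apply Finset.sum_nonneg; intro m hm; positivity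
    _ = (T:ℝ)^n / β^n := by
        rw [div_pow, ← Real.rpow_natCast ((T:ℝ)^β) n, ← Real.rpow_mul hT0,
          hβn, Real.rpow_natCast, ← mul_div_assoc, ← pow_add,
          Nat.add_sub_cancel' hkn'.le]
    _ ≤ 4 / β^n * ((GSet n T).card : ℝ) := by
        have heq : 4 / β^n * ((GSet n T).card : ℝ)
            = (4 * ((GSet n T).card : ℝ)) / β^n := by ring
        rw [heq]
        gcongr
end
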